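/- The characteristic polynomial of a uniform-block matrix N = A ∘ I[p] + B ∘ J[p] satisfies det(λ I_p − N) = (∏_{k=1}^K (λ − a_kk)^{p_k − 1}) × det(λ I_K − Δ), where Δ = A + B × P and P = diag(p_1,...,p_K). Consequently the eigenvalues of N are a_kk with multiplicity (p_k − 1) for each k, together with the K eigenvalues of Δ. -/

import Mathlib

open Matrix BigOperators

/-- Block-diagonal expansion `A ∘ I[p]`: the `p × p` matrix `Bdiag(a₁ I_{p₁}, …, a_K I_{p_K})`,
indexed by the sigma type `Σ k, Fin (p k)`. -/
def blockI {K : ℕ} (p : Fin K → ℕ) (a : Fin K → ℝ) :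
    Matrix (Σ k, Fin (p k)) (Σ k, Fin (p k)) ℝ :=
  Matrix.diagonal (fun i => a i.1)

/-- Block all-ones expansion `B ∘ J[p]`: the `p × p` matrix whose `(k,k')` block is
`B k k' • 1_{p_k × p_{k'}}`. -/
def blockJ {K : ℕ} (p : Fin K → ℕ) (B : Matrix (Fin K) (Fin K) ℝ) :
    Matrix (Σ k, Fin (p k)) (Σ k, Fin (p k)) ℝ :=
  fun i j => B i.1 j.1

/-- `P = diag(p₁, …, p_K)`. -/
def Pmat {K : ℕ} (p : Fin K → ℕ) : Matrix (Fin K) (Fin K) ℝ :=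
  Matrix.diagonal (fun k => (p k : ℝ))

/-- The `p × K` "block indicator" matrix. -/
def Umat {K : ℕ} (p : Fin K → ℕ) : Matrix (Σ k, Fin (p k)) (Fin K) ℝ :=
  Matrix.of fun i k => if i.1 = k then 1 else 0

lemma Umat_mul_mul {K : ℕ} (p : Fin K → ℕ) (B : Matrix (Fin K) (Fin K) ℝ) :
    Umat p * B * (Umat p)ᵀ = blockJ p B := by
  ext i j
  simp [Umat, blockJ, Matrix.mul_apply, ite_mul, mul_ite, Finset.sum_ite_eq, Finset.sum_ite_eq']

lemma Umat_sandwich {K : ℕ} (p : Fin K → ℕ) (d : Fin K → ℝ) :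
    (Umat p)ᵀ * Matrix.diagonal (fun i : Σ k, Fin (p k) => d i.1) * Umat p
      = Matrix.diagonal (fun k => (p k : ℝ) * d k) := by
  ext k k'
  rw [Matrix.mul_apply]
  simp only [Matrix.mul_apply, Matrix.transpose_apply, Matrix.diagonal_apply, Umat, Matrix.of_apply,
    ite_mul, mul_ite, one_mul, zero_mul, mul_one, mul_zero, Finset.sum_ite_eq, Finset.sum_ite_eq',
    Finset.mem_univ, if_true]
  rw [← Finset.univ_sigma_univ, Finset.sum_sigma]
  simp only [Finset.sum_const, Finset.card_univ, Fintype.card_fin, nsmul_eq_mul]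
  by_cases h : k = k'
  · subst h; simp
  · simp [h, Ne.symm h]

lemma key_identity {K : ℕ} (p : Fin K → ℕ) (hp : ∀ k, 1 ≤ p k)
    (a : Fin K → ℝ) (B : Matrix (Fin K) (Fin K) ℝ) (lam : ℝ)
    (hlam : ∀ k, lam - a k ≠ 0) :
    (lam • (1 : Matrix (Σ k, Fin (p k)) (Σ k, Fin (p k)) ℝ)
        - (blockI p a + blockJ p B)).det =
      (∏ k, (lam - a k) ^ (p k - 1)) *
        (lam • (1 : Matrix (Fin K) (Fin K) ℝ) - (Matrix.diagonal a + B * Pmat p)).det := by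
  set d : Fin K → ℝ := fun k => lam - a k with hd
  set Dbig : Matrix (Σ k, Fin (p k)) (Σ k, Fin (p k)) ℝ :=
    Matrix.diagonal (fun i => d i.1) with hDbig
  set Dinv : Matrix (Σ k, Fin (p k)) (Σ k, Fin (p k)) ℝ :=
    Matrix.diagonal (fun i => (d i.1)⁻¹) with hDinv
  set Dk : Matrix (Fin K) (Fin K) ℝ := Matrix.diagonal d with hDk
  set Dkinv : Matrix (Fin K) (Fin K) ℝ := Matrix.diagonal (fun k => (d k)⁻¹) with hDkinv
  have h2 : Dbig * Dinv = 1 := by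
    rw [hDbig, hDinv, Matrix.diagonal_mul_diagonal,
      show (fun i : Σ k, Fin (p k) => d i.1 * (d i.1)⁻¹) = fun _ => 1 from
        funext fun i => mul_inv_cancel₀ (hlam i.1), Matrix.diagonal_one]
  have hk2 : Dk * Dkinv = 1 := by
    rw [hDk, hDkinv, Matrix.diagonal_mul_diagonal,
      show (fun k => d k * (d k)⁻¹) = fun _ => (1:ℝ) from
        funext fun k => mul_inv_cancel₀ (hlam k), Matrix.diagonal_one]
  have h1 : lam • (1 : Matrix (Σ k, Fin (p k)) (Σ k, Fin (p k)) ℝ)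
      - (blockI p a + blockJ p B) = Dbig - Umat p * B * (Umat p)ᵀ := by
    rw [Umat_mul_mul]
    have : lam • (1 : Matrix (Σ k, Fin (p k)) (Σ k, Fin (p k)) ℝ) - blockI p a = Dbig := by
      ext i j
      by_cases h : i = j
      · subst h; simp [blockI, Matrix.one_apply, hDbig, hd]
      · simp [blockI, Matrix.one_apply, h, hDbig, Matrix.diagonal_apply_ne _ h]
    rw [sub_add_eq_sub_sub, this]
  have hRHSmat : lam • (1 : Matrix (Fin K) (Fin K) ℝ) - (Matrix.diagonal a + B * Pmat p)
      = Dk - B * Pmat p := by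
    have : lam • (1 : Matrix (Fin K) (Fin K) ℝ) - Matrix.diagonal a = Dk := by
      ext i j
      by_cases h : i = j
      · subst h; simp [Matrix.one_apply, hDk, hd]
      · simp [Matrix.one_apply, h, hDk, Matrix.diagonal_apply_ne _ h]
    rw [sub_add_eq_sub_sub, this]
  have h3 : Dbig - Umat p * B * (Umat p)ᵀ
      = Dbig * (1 + (Dinv * Umat p) * ((-B) * (Umat p)ᵀ)) := by
    rw [Matrix.mul_add, Matrix.mul_one]
    simp only [← Matrix.mul_assoc]
    rw [h2, Matrix.one_mul, Matrix.mul_neg, Matrix.neg_mul, ← sub_eq_add_neg]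
  have h4 : ((-B) * (Umat p)ᵀ) * (Dinv * Umat p)
      = -(B * (Pmat p * Dkinv)) := by
    have hs : (Umat p)ᵀ * Dinv * Umat p
        = Matrix.diagonal (fun k => (p k : ℝ) * (d k)⁻¹) :=
      Umat_sandwich p (fun k => (d k)⁻¹)
    have hP : Pmat p * Dkinv = Matrix.diagonal (fun k => (p k : ℝ) * (d k)⁻¹) := by
      rw [Pmat, hDkinv, Matrix.diagonal_mul_diagonal]
    rw [hP, ← hs]
    simp only [Matrix.neg_mul, Matrix.mul_assoc]
  have h5 : (1 : Matrix (Fin K) (Fin K) ℝ) + -(B * (Pmat p * Dkinv))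
      = (Dk - B * Pmat p) * Dkinv := by
    rw [Matrix.sub_mul, hk2, ← Matrix.mul_assoc, ← sub_eq_add_neg]
  have hdetDbig : Dbig.det = ∏ k, d k ^ p k := by
    rw [hDbig, Matrix.det_diagonal, ← Finset.univ_sigma_univ, Finset.prod_sigma]
    simp
  have hdetDkinv : Dkinv.det = ∏ k, (d k)⁻¹ := by
    rw [hDkinv, Matrix.det_diagonal]
  rw [h1, h3, Matrix.det_mul, Matrix.det_one_add_mul_comm, h4, h5, Matrix.det_mul,
    hdetDbig, hdetDkinv, hRHSmat]
  rw [show (∏ k, d k ^ p k) * ((Dk - B * Pmat p).det * ∏ k, (d k)⁻¹)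
      = ((∏ k, d k ^ p k) * ∏ k, (d k)⁻¹) * (Dk - B * Pmat p).det by ring,
    ← Finset.prod_mul_distrib]
  congr 1
  refine Finset.prod_congr rfl fun k _ => ?_
  rw [pow_sub₀ (d k) (hlam k) (hp k), pow_one]

theorem blockHadamard_charpoly {K : ℕ} (p : Fin K → ℕ) (hp : ∀ k, 1 ≤ p k)
    (a : Fin K → ℝ) (B : Matrix (Fin K) (Fin K) ℝ) (hB : B.IsSymm) :
    ∀ lam : ℝ,
      (lam • (1 : Matrix (Σ k, Fin (p k)) (Σ k, Fin (p k)) ℝ)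
          - (blockI p a + blockJ p B)).det =
        (∏ k, (lam - a k) ^ (p k - 1)) *
          (lam • (1 : Matrix (Fin K) (Fin K) ℝ) - (Matrix.diagonal a + B * Pmat p)).det := by
  have hdense : Dense ((Set.range a)ᶜ) :=
    Set.Countable.dense_compl ℝ (Set.finite_range a).countable
  have hc1 : Continuous fun lam : ℝ =>
      (lam • (1 : Matrix (Σ k, Fin (p k)) (Σ k, Fin (p k)) ℝ)
        - (blockI p a + blockJ p B)).det := by
    apply Continuous.matrix_det
    exact (continuous_id.smul continuous_const).sub continuous_const
  have hc2 : Continuous fun lam : ℝ =>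
      (∏ k, (lam - a k) ^ (p k - 1)) *
        (lam • (1 : Matrix (Fin K) (Fin K) ℝ) - (Matrix.diagonal a + B * Pmat p)).det := by
    apply Continuous.mul
    · exact continuous_finset_prod _ fun k _ =>
        ((continuous_id.sub continuous_const).pow _)
    · apply Continuous.matrix_det
      exact (continuous_id.smul continuous_const).sub continuous_const
  have heq := Continuous.ext_on hdense hc1 hc2 ?_
  · exact fun lam => congrFun heq lam
  · intro lam hlam
    refine key_identity p hp a B lam fun k => ?_
    intro h
    exact hlam ⟨k, by linarith⟩
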